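/- arXiv:1002.0011 — 2 statements merged into one kernel-verified Lean document; each statement's English description precedes it below -/
import Mathlib

section
/- (Integral inequality for oscillation bounds) Let f : [a,b] → ℝ be C² with f(a) = f(b) = 0, f not identically zero, having exactly n interior zeros, and suppose f''/f extends continuously to [a,b]. Then for ρ = π (b−a)²/((n+1)² e²) one has ∫ₐᵇ exp(−ρ f''(z)/f(z)) dz ≥ (n+1) e √(ρπ). More generally, there exists ρ > 0 such that ∫ₐᵇ exp(−ρ f''(z)/f(z)) dz ≥ (n+1) e √(ρπ). -/
open Real MeasureTheory intervalIntegral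

lemma aux_half_left (c m M : ℝ) (hcm : c < m) (F q : ℝ → ℝ)
    (hFd : Differentiable ℝ F) (hF1 : ContDiff ℝ 1 (deriv F))
    (hq : ContinuousOn q (Set.Icc c m))
    (hq0 : ∀ z ∈ Set.Icc c m, 0 ≤ q z)
    (hbd : ∀ z ∈ Set.Ioc c m, -(M * q z) ≤ deriv (deriv F) z)
    (hFc : F c = 0) (hFm : F m = M) (hM : 0 < M) (hder : deriv F m = 0) :
    1 ≤ (m - c) * ∫ z in c..m, q z := by
  have hF'd : Differentiable ℝ (deriv F) := (contDiff_one_iff_deriv.mp hF1).1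
  have hF'' : Continuous (deriv (deriv F)) := (contDiff_one_iff_deriv.mp hF1).2
  have hqint : ∀ u v, u ∈ Set.Icc c m → v ∈ Set.Icc c m → IntervalIntegrable q volume u v := by
    intro u v hu hv
    exact (hq.mono (Set.uIcc_subset_Icc hu hv)).intervalIntegrable
  set Q := ∫ z in c..m, q z with hQdef
  have hQ0 : 0 ≤ Q := intervalIntegral.integral_nonneg hcm.le (fun x hx => hq0 x hx)
  have B : ∀ t ∈ Set.Icc c m, deriv F t ≤ M * Q := by
    intro t ht
    have h1 : ∫ z in t..m, deriv (deriv F) z = deriv F m - deriv F t :=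
      integral_deriv_eq_sub (fun x _ => hF'd x) (hF''.intervalIntegrable _ _)
    have h2 : -(M * ∫ z in t..m, q z) ≤ ∫ z in t..m, deriv (deriv F) z := by
      have heq : ∫ z in t..m, -(M * q z) = -(M * ∫ z in t..m, q z) := by
        rw [intervalIntegral.integral_neg, intervalIntegral.integral_const_mul]
      rw [← heq]
      apply intervalIntegral.integral_mono_ae_restrict ht.2
        ((ContinuousOn.intervalIntegrable (by
          rw [Set.uIcc_of_le ht.2]
          exact (continuousOn_const.mul (hq.mono (Set.Icc_subset_Icc ht.1 le_rfl))).neg)))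
        (hF''.intervalIntegrable _ _)
      have hne : ∀ᵐ z ∂(volume.restrict (Set.Icc t m)), z ≠ c := by
        apply ae_restrict_of_ae
        rw [MeasureTheory.ae_iff]
        have : {z : ℝ | ¬ z ≠ c} = {c} := by ext z; simp
        rw [this]; exact Real.volume_singleton
      have hmem : ∀ᵐ z ∂(volume.restrict (Set.Icc t m)), z ∈ Set.Icc t m :=
        ae_restrict_mem measurableSet_Icc
      filter_upwards [hne, hmem] with z hz hzm
      exact hbd z ⟨lt_of_le_of_ne (ht.1.trans hzm.1) (Ne.symm hz), hzm.2⟩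
    have h3 : ∫ z in t..m, q z ≤ Q := by
      have := intervalIntegral.integral_add_adjacent_intervals
        (hqint c t (Set.left_mem_Icc.mpr hcm.le) ht) (hqint t m ht (Set.right_mem_Icc.mpr hcm.le))
      have h4 : 0 ≤ ∫ z in c..t, q z :=
        intervalIntegral.integral_nonneg ht.1 (fun x hx => hq0 x ⟨hx.1, hx.2.trans ht.2⟩)
      rw [hQdef, ← this]; linarith
    have h5 : M * ∫ z in t..m, q z ≤ M * Q := mul_le_mul_of_nonneg_left h3 hM.le
    rw [hder] at h1
    linarith
  have h4 : ∫ z in c..m, deriv F z = F m - F c :=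
    integral_deriv_eq_sub (fun x _ => hFd x) (hF1.continuous.intervalIntegrable _ _)
  have h5 : ∫ z in c..m, deriv F z ≤ ∫ z in c..m, (M * Q) :=
    intervalIntegral.integral_mono_on hcm.le (hF1.continuous.intervalIntegrable _ _)
      intervalIntegrable_const B
  rw [h4, hFm, hFc, intervalIntegral.integral_const, smul_eq_mul] at h5
  have hmc : 0 < m - c := by linarith
  nlinarith

lemma aux_half_right (m d M : ℝ) (hmd : m < d) (F q : ℝ → ℝ)
    (hFd : Differentiable ℝ F) (hF1 : ContDiff ℝ 1 (deriv F))
    (hq : ContinuousOn q (Set.Icc m d))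
    (hq0 : ∀ z ∈ Set.Icc m d, 0 ≤ q z)
    (hbd : ∀ z ∈ Set.Ico m d, -(M * q z) ≤ deriv (deriv F) z)
    (hFm : F m = M) (hFd0 : F d = 0) (hM : 0 < M) (hder : deriv F m = 0) :
    1 ≤ (d - m) * ∫ z in m..d, q z := by
  have hF'd : Differentiable ℝ (deriv F) := (contDiff_one_iff_deriv.mp hF1).1
  have hF'' : Continuous (deriv (deriv F)) := (contDiff_one_iff_deriv.mp hF1).2
  have hqint : ∀ u v, u ∈ Set.Icc m d → v ∈ Set.Icc m d → IntervalIntegrable q volume u v := by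
    intro u v hu hv
    exact (hq.mono (Set.uIcc_subset_Icc hu hv)).intervalIntegrable
  set Q := ∫ z in m..d, q z with hQdef
  have hQ0 : 0 ≤ Q := intervalIntegral.integral_nonneg hmd.le (fun x hx => hq0 x hx)
  have B : ∀ t ∈ Set.Icc m d, -(M * Q) ≤ deriv F t := by
    intro t ht
    have h1 : ∫ z in m..t, deriv (deriv F) z = deriv F t - deriv F m :=
      integral_deriv_eq_sub (fun x _ => hF'd x) (hF''.intervalIntegrable _ _)
    have h2 : -(M * ∫ z in m..t, q z) ≤ ∫ z in m..t, deriv (deriv F) z := by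
      have heq : ∫ z in m..t, -(M * q z) = -(M * ∫ z in m..t, q z) := by
        rw [intervalIntegral.integral_neg, intervalIntegral.integral_const_mul]
      rw [← heq]
      apply intervalIntegral.integral_mono_ae_restrict ht.1
        ((ContinuousOn.intervalIntegrable (by
          rw [Set.uIcc_of_le ht.1]
          exact (continuousOn_const.mul (hq.mono (Set.Icc_subset_Icc le_rfl ht.2))).neg)))
        (hF''.intervalIntegrable _ _)
      have hne : ∀ᵐ z ∂(volume.restrict (Set.Icc m t)), z ≠ d := by
        apply ae_restrict_of_ae
        rw [MeasureTheory.ae_iff]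
        have : {z : ℝ | ¬ z ≠ d} = {d} := by ext z; simp
        rw [this]; exact Real.volume_singleton
      have hmem : ∀ᵐ z ∂(volume.restrict (Set.Icc m t)), z ∈ Set.Icc m t :=
        ae_restrict_mem measurableSet_Icc
      filter_upwards [hne, hmem] with z hz hzm
      exact hbd z ⟨hzm.1, lt_of_le_of_ne (hzm.2.trans ht.2) hz⟩
    have h3 : ∫ z in m..t, q z ≤ Q := by
      have := intervalIntegral.integral_add_adjacent_intervals
        (hqint m t (Set.left_mem_Icc.mpr hmd.le) ht) (hqint t d ht (Set.right_mem_Icc.mpr hmd.le))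
      have h4 : 0 ≤ ∫ z in t..d, q z :=
        intervalIntegral.integral_nonneg ht.2 (fun x hx => hq0 x ⟨ht.1.trans hx.1, hx.2⟩)
      rw [hQdef, ← this]; linarith
    have h5 : M * ∫ z in m..t, q z ≤ M * Q := mul_le_mul_of_nonneg_left h3 hM.le
    rw [hder] at h1
    linarith
  have h4 : ∫ z in m..d, deriv F z = F d - F m :=
    integral_deriv_eq_sub (fun x _ => hFd x) (hF1.continuous.intervalIntegrable _ _)
  have h5 : ∫ z in m..d, (-(M * Q)) ≤ ∫ z in m..d, deriv F z :=
    intervalIntegral.integral_mono_on hmd.le intervalIntegrable_const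
      (hF1.continuous.intervalIntegrable _ _) B
  rw [h4, hFm, hFd0, intervalIntegral.integral_const, smul_eq_mul] at h5
  have hmc : 0 < d - m := by linarith
  nlinarith

lemma aux_lyap (c d : ℝ) (hcd : c < d) (f g : ℝ → ℝ) (hf : ContDiff ℝ 2 f)
    (hc : f c = 0) (hd : f d = 0) (hne : ∀ z ∈ Set.Ioo c d, f z ≠ 0)
    (hg : ContinuousOn g (Set.Icc c d))
    (hgval : ∀ z ∈ Set.Ioo c d, g z = deriv (deriv f) z / f z) :
    4 / (d - c) ≤ ∫ z in c..d, max (-g z) 0 := by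
  have hf2 : ContDiff ℝ (1+1) f := by norm_num; exact hf
  have hfd : Differentiable ℝ f := hf2.differentiable (by norm_num)
  have hf1 : ContDiff ℝ 1 (deriv f) := (contDiff_succ_iff_deriv.mp hf2).2.2
  have hfc : Continuous f := hfd.continuous
  obtain ⟨m, hmIcc, hmax⟩ := isCompact_Icc.exists_isMaxOn (Set.nonempty_Icc.mpr hcd.le)
    (hfc.abs.continuousOn (s := Set.Icc c d))
  have hmax' : ∀ x ∈ Set.Icc c d, |f x| ≤ |f m| := fun x hx => hmax hx
  set M := |f m| with hMdef
  have hz0 : (c + d) / 2 ∈ Set.Ioo c d := ⟨by linarith, by linarith⟩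
  have hM : 0 < M := lt_of_lt_of_le (abs_pos.mpr (hne _ hz0))
    (hmax' _ (Set.Ioo_subset_Icc_self hz0))
  have hmI : m ∈ Set.Ioo c d := by
    rcases eq_or_lt_of_le hmIcc.1 with h | h
    · exfalso; rw [hMdef, ← h, hc] at hM; simp at hM
    rcases eq_or_lt_of_le hmIcc.2 with h2 | h2
    · exfalso; rw [hMdef, h2, hd] at hM; simp at hM
    exact ⟨h, h2⟩
  obtain ⟨s, hsabs, hsfm⟩ : ∃ s : ℝ, |s| = 1 ∧ s * f m = |f m| := by
    rcases le_or_gt 0 (f m) with h | h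
    · exact ⟨1, by norm_num, by rw [abs_of_nonneg h, one_mul]⟩
    · exact ⟨-1, by norm_num, by rw [abs_of_neg h]; ring⟩
  have hs0 : s ≠ 0 := by intro h0; rw [h0] at hsabs; norm_num at hsabs
  set F : ℝ → ℝ := fun x => s * f x with hFdef
  have hFm : F m = M := hsfm
  have hFabs : ∀ x, |F x| = |f x| := by
    intro x; show |s * f x| = |f x|; rw [abs_mul, hsabs, one_mul]
  have hFD : Differentiable ℝ F := hfd.const_mul s
  have hF' : deriv F = fun x => s * deriv f x := by
    funext x; exact deriv_const_mul s (hfd x)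
  have hF1 : ContDiff ℝ 1 (deriv F) := by rw [hF']; exact hf1.const_smul s
  have hF'' : deriv (deriv F) = fun x => s * deriv (deriv f) x := by
    rw [hF']; funext x
    exact deriv_const_mul s ((contDiff_one_iff_deriv.mp hf1).1 x)
  have hFc : F c = 0 := by show s * f c = 0; rw [hc, mul_zero]
  have hFd0 : F d = 0 := by show s * f d = 0; rw [hd, mul_zero]
  have hFle : ∀ x ∈ Set.Icc c d, F x ≤ M := fun x hx =>
    (le_abs_self _).trans (by rw [hFabs]; exact hmax' x hx)
  have hFpos : ∀ z ∈ Set.Ioo c d, 0 < F z := by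
    intro z hz
    have hFne : F z ≠ 0 := mul_ne_zero hs0 (hne z hz)
    rcases hFne.lt_or_gt with hlt | hpos
    · exfalso
      have hsub : Set.uIcc z m ⊆ Set.Ioo c d := Set.ordConnected_Ioo.uIcc_subset hz hmI
      have hiv := intermediate_value_uIcc
        (hFD.continuous.continuousOn : ContinuousOn F (Set.uIcc z m))
      have h0 : (0:ℝ) ∈ Set.uIcc (F z) (F m) :=
        Set.mem_uIcc.mpr (Or.inl ⟨hlt.le, by rw [hFm]; exact hM.le⟩)
      obtain ⟨w, hw, hw0⟩ := hiv h0
      exact hne w (hsub hw) (by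
        rcases mul_eq_zero.mp (hw0 : s * f w = 0) with h | h
        · exact absurd h hs0
        · exact h)
    · exact hpos
  have hderm : deriv F m = 0 := by
    have hmaxF : IsMaxOn F (Set.Icc c d) m := by
      intro x hx
      simp only [Set.mem_setOf_eq]
      calc F x ≤ M := hFle x hx
        _ = F m := hFm.symm
    exact (hmaxF.isLocalMax (Icc_mem_nhds hmI.1 hmI.2)).deriv_eq_zero
  have hF''eq : ∀ z ∈ Set.Ioo c d, deriv (deriv F) z = g z * F z := by
    intro z hz
    have hfz := hne z hz
    have hthis : deriv (deriv f) z = g z * f z := by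
      rw [hgval z hz, div_mul_cancel₀ _ hfz]
    rw [hF'']
    show s * deriv (deriv f) z = g z * (s * f z)
    rw [hthis]; ring
  set q : ℝ → ℝ := fun z => max (-g z) 0 with hqdef
  have hq0 : ∀ z, 0 ≤ q z := fun z => le_max_right _ _
  have hqcont : ContinuousOn q (Set.Icc c d) :=
    (continuous_id'.max continuous_const).comp_continuousOn hg.neg
  have hbd : ∀ z ∈ Set.Ioo c d, -(M * q z) ≤ deriv (deriv F) z := by
    intro z hz
    rw [hF''eq z hz]
    have h1 : 0 < F z := hFpos z hz
    have h2 : F z ≤ M := hFle z (Set.Ioo_subset_Icc_self hz)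
    have h3 : -g z ≤ q z := le_max_left _ _
    nlinarith [hq0 z, mul_le_mul_of_nonneg_left h2 (hq0 z),
      mul_le_mul_of_nonneg_right h3 h1.le]
  have h1 : 1 ≤ (m - c) * ∫ z in c..m, q z := by
    apply aux_half_left c m M hmI.1 F q hFD hF1
      (hqcont.mono (Set.Icc_subset_Icc le_rfl hmI.2.le))
      (fun z _ => hq0 z) _ hFc hFm hM hderm
    intro z hz
    exact hbd z ⟨hz.1, lt_of_le_of_lt hz.2 hmI.2⟩
  have h2 : 1 ≤ (d - m) * ∫ z in m..d, q z := by
    apply aux_half_right m d M hmI.2 F q hFD hF1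
      (hqcont.mono (Set.Icc_subset_Icc hmI.1.le le_rfl))
      (fun z _ => hq0 z) _ hFm hFd0 hM hderm
    intro z hz
    exact hbd z ⟨lt_of_lt_of_le hmI.1 hz.1, hz.2⟩
  have hint1 : IntervalIntegrable q volume c m := by
    apply ContinuousOn.intervalIntegrable
    rw [Set.uIcc_of_le hmI.1.le]
    exact hqcont.mono (Set.Icc_subset_Icc le_rfl hmI.2.le)
  have hint2 : IntervalIntegrable q volume m d := by
    apply ContinuousOn.intervalIntegrable
    rw [Set.uIcc_of_le hmI.2.le]
    exact hqcont.mono (Set.Icc_subset_Icc hmI.1.le le_rfl)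
  have hsplit : (∫ z in c..m, q z) + (∫ z in m..d, q z) = ∫ z in c..d, q z :=
    intervalIntegral.integral_add_adjacent_intervals hint1 hint2
  have ha : 0 < m - c := by linarith [hmI.1]
  have hb : 0 < d - m := by linarith [hmI.2]
  have hQ1 : 1 / (m - c) ≤ ∫ z in c..m, q z := by
    rw [div_le_iff₀ ha]; linarith [h1]
  have hQ2 : 1 / (d - m) ≤ ∫ z in m..d, q z := by
    rw [div_le_iff₀ hb]; linarith [h2]
  have hkey : 4 / (d - c) ≤ 1 / (m - c) + 1 / (d - m) := by
    rw [div_add_div _ _ ha.ne' hb.ne', div_le_div_iff₀ (by linarith) (by positivity)]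
    nlinarith [sq_nonneg ((m - c) - (d - m))]
  show 4 / (d - c) ≤ ∫ z in c..d, q z
  calc 4 / (d - c) ≤ 1 / (m - c) + 1 / (d - m) := hkey
    _ ≤ (∫ z in c..m, q z) + (∫ z in m..d, q z) := add_le_add hQ1 hQ2
    _ = ∫ z in c..d, q z := hsplit

lemma aux_key (n : ℕ) : ∀ (a b : ℝ), a < b → ∀ (f g : ℝ → ℝ), ContDiff ℝ 2 f → f a = 0 → f b = 0 →
    ∀ Z : Finset ℝ, ↑Z ⊆ Set.Ioo a b → Z.card = n →
    (∀ z ∈ Set.Ioo a b, f z = 0 ↔ z ∈ Z) →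
    ContinuousOn g (Set.Icc a b) →
    (∀ z ∈ Set.Icc a b, f z ≠ 0 → g z = deriv (deriv f) z / f z) →
    4 * ((n:ℝ)+1)^2 / (b-a) ≤ ∫ z in a..b, max (-g z) 0 := by
  induction n with
  | zero =>
    intro a b hab f g hf ha hb Z hsub hcard hzeros hg hgval
    have hZ : Z = ∅ := Finset.card_eq_zero.mp hcard
    have hne : ∀ w ∈ Set.Ioo a b, f w ≠ 0 := by
      intro w hw h0
      have := (hzeros w hw).mp h0; rw [hZ] at this; simp at this
    have h := aux_lyap a b hab f g hf ha hb hne hg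
      (fun w hw => hgval w (Set.Ioo_subset_Icc_self hw) (hne w hw))
    norm_num at h ⊢
    exact h
  | succ k ih =>
    intro a b hab f g hf ha hb Z hsub hcard hzeros hg hgval
    have hZne : Z.Nonempty := by rw [← Finset.card_pos, hcard]; omega
    set z := Z.max' hZne with hzdef
    have hzZ : z ∈ Z := Z.max'_mem hZne
    have hzI : z ∈ Set.Ioo a b := hsub hzZ
    have hfz : f z = 0 := (hzeros z hzI).mpr hzZ
    have hleft : 4 * ((k:ℝ)+1)^2 / (z-a) ≤ ∫ w in a..z, max (-g w) 0 := by
      apply ih a z hzI.1 f g hf ha hfz (Z.erase z)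
      · intro w hw
        simp only [Finset.coe_erase, Set.mem_diff, Set.mem_singleton_iff] at hw
        obtain ⟨hwZ, hwne⟩ := hw
        have hwI := hsub hwZ
        exact ⟨hwI.1, lt_of_le_of_ne (Z.le_max' w hwZ) hwne⟩
      · rw [Finset.card_erase_of_mem hzZ, hcard]; omega
      · intro w hw
        have hwI : w ∈ Set.Ioo a b := ⟨hw.1, hw.2.trans hzI.2⟩
        rw [hzeros w hwI, Finset.mem_erase]
        constructor
        · intro h; exact ⟨ne_of_lt hw.2, h⟩
        · intro h; exact h.2
      · exact hg.mono (Set.Icc_subset_Icc le_rfl hzI.2.le)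
      · intro w hw hfw
        exact hgval w ⟨hw.1, hw.2.trans hzI.2.le⟩ hfw
    have hright : 4 / (b-z) ≤ ∫ w in z..b, max (-g w) 0 := by
      have hne : ∀ w ∈ Set.Ioo z b, f w ≠ 0 := by
        intro w hw h0
        have hwI : w ∈ Set.Ioo a b := ⟨hzI.1.trans hw.1, hw.2⟩
        have hwZ := (hzeros w hwI).mp h0
        exact absurd (Z.le_max' w hwZ) (not_le.mpr hw.1)
      apply aux_lyap z b hzI.2 f g hf hfz hb hne
        (hg.mono (Set.Icc_subset_Icc hzI.1.le le_rfl))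
      intro w hw
      exact hgval w ⟨hzI.1.le.trans hw.1.le, hw.2.le⟩ (hne w hw)
    have hqcont : ContinuousOn (fun w => max (-g w) 0) (Set.Icc a b) :=
      (continuous_id'.max continuous_const).comp_continuousOn hg.neg
    have hint1 : IntervalIntegrable (fun w => max (-g w) 0) volume a z := by
      apply ContinuousOn.intervalIntegrable
      rw [Set.uIcc_of_le hzI.1.le]
      exact hqcont.mono (Set.Icc_subset_Icc le_rfl hzI.2.le)
    have hint2 : IntervalIntegrable (fun w => max (-g w) 0) volume z b := by
      apply ContinuousOn.intervalIntegrable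
      rw [Set.uIcc_of_le hzI.2.le]
      exact hqcont.mono (Set.Icc_subset_Icc hzI.1.le le_rfl)
    have hsplit := intervalIntegral.integral_add_adjacent_intervals hint1 hint2
    rw [← hsplit]
    have hs : 0 < z - a := by linarith [hzI.1]
    have ht : 0 < b - z := by linarith [hzI.2]
    have harith : 4 * (((k+1:ℕ):ℝ)+1)^2 / (b-a) ≤ 4*((k:ℝ)+1)^2/(z-a) + 4/(b-z) := by
      push_cast
      rw [div_add_div _ _ hs.ne' ht.ne', div_le_div_iff₀ (by linarith) (by positivity)]
      nlinarith [sq_nonneg (((k:ℝ)+1)*(b-z) - (z-a)), mul_pos hs ht]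
    calc 4 * (((k+1:ℕ):ℝ)+1)^2 / (b-a) ≤ 4*((k:ℝ)+1)^2/(z-a) + 4/(b-z) := harith
      _ ≤ _ := add_le_add hleft hright

lemma aux_exp (t : ℝ) : Real.exp 1 * max t 0 ≤ Real.exp t := by
  rcases le_or_gt t 0 with h | h
  · rw [max_eq_right h, mul_zero]; exact (Real.exp_pos t).le
  · rw [max_eq_left h.le]
    have h2 := Real.add_one_le_exp (t - 1)
    calc Real.exp 1 * t = Real.exp 1 * ((t-1)+1) := by ring
      _ ≤ Real.exp 1 * Real.exp (t-1) := by nlinarith [Real.exp_pos 1]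
      _ = Real.exp t := by rw [← Real.exp_add]; ring_nf

/-- Integral inequality for oscillation bounds: if `f` is `C²` on `[a,b]`,
vanishes at the endpoints, is not identically zero, has exactly `n` interior
zeros, and `f''/f` extends continuously (as `g`) to `[a,b]`, then for
`ρ = π (b-a)²/((n+1)² e²)` one has
`∫ₐᵇ exp(-ρ f''/f) dz ≥ (n+1) e √(ρπ)`; more generally there exists `ρ > 0`
for which this inequality holds. -/
theorem stmt7 (a b : ℝ) (hab : a < b) (n : ℕ) (f g : ℝ → ℝ)
    (hf : ContDiff ℝ 2 f) (hbca : f a = 0) (hbcb : f b = 0)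
    (hnontriv : ∃ z ∈ Set.Icc a b, f z ≠ 0)
    (Z : Finset ℝ) (hZsub : ↑Z ⊆ Set.Ioo a b) (hZcard : Z.card = n)
    (hZzeros : ∀ z ∈ Set.Ioo a b, f z = 0 ↔ z ∈ Z)
    (hg : ContinuousOn g (Set.Icc a b))
    (hgval : ∀ z ∈ Set.Icc a b, f z ≠ 0 → g z = deriv (deriv f) z / f z) :
    ((n + 1 : ℝ) * exp 1 * Real.sqrt ((π * (b - a)^2 / ((n + 1 : ℝ)^2 * (exp 1)^2)) * π)
        ≤ ∫ z in a..b, exp (-(π * (b - a)^2 / ((n + 1 : ℝ)^2 * (exp 1)^2)) * g z)) ∧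
    ∃ ρ : ℝ, 0 < ρ ∧
      (n + 1 : ℝ) * exp 1 * Real.sqrt (ρ * π) ≤ ∫ z in a..b, exp (-ρ * g z) := by
  set L : ℝ := b - a with hLdef
  have hL : 0 < L := by rw [hLdef]; linarith
  set N : ℝ := (n : ℝ) + 1 with hNdef
  have hN : 0 < N := by positivity
  set E : ℝ := exp 1 with hEdef
  have hE : 0 < E := Real.exp_pos 1
  set ρ : ℝ := π * L^2 / (N^2 * E^2) with hρdef
  have hρ : 0 < ρ := by rw [hρdef]; positivity
  have hsqrt : Real.sqrt (ρ * π) = π * L / (N * E) := by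
    have heq : ρ * π = (π * L / (N * E))^2 := by
      rw [hρdef]; field_simp
    rw [heq, Real.sqrt_sq (by positivity)]
  have hlhs : N * E * Real.sqrt (ρ * π) = π * L := by
    rw [hsqrt]; field_simp
  have hkey := aux_key n a b hab f g hf hbca hbcb Z hZsub hZcard hZzeros hg hgval
  have hptwise : ∀ z, E * ρ * max (-g z) 0 ≤ exp (-ρ * g z) := by
    intro z
    have h1 : ρ * max (-g z) 0 = max (ρ * -g z) (ρ * 0) :=
      mul_max_of_nonneg _ _ hρ.le
    have h2 := aux_exp (ρ * -g z)
    calc E * ρ * max (-g z) 0 = E * (ρ * max (-g z) 0) := by ring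
      _ = E * max (ρ * -g z) (ρ * 0) := by rw [h1]
      _ = E * max (ρ * -g z) 0 := by rw [mul_zero]
      _ ≤ exp (ρ * -g z) := h2
      _ = exp (-ρ * g z) := by ring_nf
  have hqcont : ContinuousOn (fun w => max (-g w) 0) (Set.Icc a b) :=
    (continuous_id'.max continuous_const).comp_continuousOn hg.neg
  have hint1 : IntervalIntegrable (fun z => E * ρ * max (-g z) 0) volume a b := by
    apply ContinuousOn.intervalIntegrable
    rw [Set.uIcc_of_le hab.le]
    exact continuousOn_const.mul hqcont
  have hint2 : IntervalIntegrable (fun z => exp (-ρ * g z)) volume a b := by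
    apply ContinuousOn.intervalIntegrable
    rw [Set.uIcc_of_le hab.le]
    exact Real.continuous_exp.comp_continuousOn (continuousOn_const.mul hg)
  have hmono : (∫ z in a..b, E * ρ * max (-g z) 0) ≤ ∫ z in a..b, exp (-ρ * g z) :=
    intervalIntegral.integral_mono_on hab.le hint1 hint2 (fun z _ => hptwise z)
  have hconst : (∫ z in a..b, E * ρ * max (-g z) 0) = E * ρ * ∫ z in a..b, max (-g z) 0 :=
    intervalIntegral.integral_const_mul _ _
  have hchain : π * L ≤ ∫ z in a..b, exp (-ρ * g z) := by
    have h3 : E * ρ * (4 * N^2 / L) ≤ E * ρ * ∫ z in a..b, max (-g z) 0 :=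
      mul_le_mul_of_nonneg_left hkey (by positivity)
    have h4 : E * ρ * (4 * N^2 / L) = 4 * π * L / E := by
      rw [hρdef]; field_simp
    have hE4 : E ≤ 4 := le_of_lt (lt_trans Real.exp_one_lt_d9 (by norm_num))
    have h5 : π * L ≤ 4 * π * L / E := by
      rw [le_div_iff₀ hE]
      nlinarith [mul_nonneg (le_of_lt (mul_pos Real.pi_pos hL)) (sub_nonneg.mpr hE4)]
    have h6 : 4 * π * L / E ≤ E * ρ * ∫ z in a..b, max (-g z) 0 := by
      rw [← h4]; exact h3
    calc π * L ≤ 4 * π * L / E := h5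
      _ ≤ E * ρ * ∫ z in a..b, max (-g z) 0 := h6
      _ = ∫ z in a..b, E * ρ * max (-g z) 0 := hconst.symm
      _ ≤ ∫ z in a..b, exp (-ρ * g z) := hmono
  have main : N * E * Real.sqrt (ρ * π) ≤ ∫ z in a..b, exp (-ρ * g z) := by
    rw [hlhs]; exact hchain
  exact ⟨main, ρ, hρ, main⟩
end

section
/- (Sufficient stability condition) Let Q : [a,b] → ℝ be continuous and suppose the lowest Dirichlet eigenvalue m₀² of v'' = (Q − m²)v on [a,b] exists with nodeless eigenfunction v₀ > 0 on (a,b). If there exists ρ > 0 with ∫ₐᵇ e^{−ρ Q(z)} dz ≤ e√(ρπ), then m₀² ≥ 0. -/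
open Real MeasureTheory Filter Set

lemma e_mul_le_exp (x : ℝ) : Real.exp 1 * x ≤ Real.exp x := by
  have h := Real.add_one_le_exp (x - 1)
  have hx : x ≤ Real.exp (x - 1) := by linarith
  calc Real.exp 1 * x ≤ Real.exp 1 * Real.exp (x - 1) :=
        mul_le_mul_of_nonneg_left hx (Real.exp_pos 1).le
    _ = Real.exp x := by rw [← Real.exp_add]; ring_nf

/-- Sufficient stability condition: if `m₀²` is the lowest Dirichlet eigenvalue
of `v'' = (Q - m²) v` on `[a,b]`, with a nodeless eigenfunction `v₀ > 0` on
`(a,b)`, and there exists `ρ > 0` with `∫ₐᵇ e^{-ρ Q} dz ≤ e √(ρπ)`, then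
`m₀² ≥ 0`. -/
theorem stmt9 (a b : ℝ) (hab : a < b) (Q : ℝ → ℝ)
    (hQ : ContinuousOn Q (Set.Icc a b))
    (m0sq : ℝ) (v₀ : ℝ → ℝ) (hv₀ : ContDiff ℝ 2 v₀)
    (hode : ∀ z ∈ Set.Icc a b, deriv (deriv v₀) z = (Q z - m0sq) * v₀ z)
    (hbca : v₀ a = 0) (hbcb : v₀ b = 0)
    (hnodeless : ∀ z ∈ Set.Ioo a b, 0 < v₀ z)
    (hlowest : ∀ lam : ℝ, (∃ v : ℝ → ℝ, ContDiff ℝ 2 v ∧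
        (∃ z ∈ Set.Icc a b, v z ≠ 0) ∧ v a = 0 ∧ v b = 0 ∧
        ∀ z ∈ Set.Icc a b, deriv (deriv v) z = (Q z - lam) * v z) → m0sq ≤ lam)
    (ρ : ℝ) (hρ : 0 < ρ)
    (hineq : ∫ z in a..b, exp (-ρ * Q z) ≤ exp 1 * Real.sqrt (ρ * π)) :
    0 ≤ m0sq := by
  classical
  set S : ℝ := exp 1 * Real.sqrt (ρ * π) with hS
  set K : ℝ := exp (-(ρ * m0sq)) with hK
  set w : ℝ → ℝ := fun z => deriv v₀ z / v₀ z with hw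
  set Φ : ℝ → ℝ := fun u => ∫ t in (0:ℝ)..u, exp (-ρ * t ^ 2) with hΦ
  have hv₀c : Continuous v₀ := hv₀.continuous
  have hv₀'c : Continuous (deriv v₀) := hv₀.continuous_deriv one_le_two
  have hv₀diff : Differentiable ℝ v₀ := hv₀.differentiable two_ne_zero
  have hv₀'diff : Differentiable ℝ (deriv v₀) := by
    have h2 : ContDiff ℝ (1 + 1) v₀ := by rw [one_add_one_eq_two]; exact hv₀
    exact (contDiff_succ_iff_deriv.mp h2).2.2.differentiable (by norm_num)
  -- gaussian integrability and continuity
  have hgc : Continuous (fun t : ℝ => exp (-ρ * t ^ 2)) :=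
    Real.continuous_exp.comp (continuous_const.mul (continuous_pow 2))
  have hgint : Integrable (fun t : ℝ => exp (-ρ * t ^ 2)) := integrable_exp_neg_mul_sq hρ
  -- Φ is monotone
  have hΦmono : Monotone Φ := by
    intro u v huv
    have h1 : IntervalIntegrable (fun t : ℝ => exp (-ρ * t ^ 2)) volume 0 u :=
      hgc.intervalIntegrable _ _
    have h2 : IntervalIntegrable (fun t : ℝ => exp (-ρ * t ^ 2)) volume u v :=
      hgc.intervalIntegrable _ _
    have hadd := intervalIntegral.integral_add_adjacent_intervals h1 h2
    have hnn : 0 ≤ ∫ t in u..v, exp (-ρ * t ^ 2) :=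
      intervalIntegral.integral_nonneg huv (fun t _ => (exp_pos _).le)
    simp only [hΦ]
    rw [← hadd]; linarith
  -- Φ difference identity
  have hΦdiff : ∀ u v : ℝ, Φ v - Φ u = ∫ t in u..v, exp (-ρ * t ^ 2) := by
    intro u v
    have h1 : IntervalIntegrable (fun t : ℝ => exp (-ρ * t ^ 2)) volume 0 u :=
      hgc.intervalIntegrable _ _
    have h2 : IntervalIntegrable (fun t : ℝ => exp (-ρ * t ^ 2)) volume u v :=
      hgc.intervalIntegrable _ _
    have hadd := intervalIntegral.integral_add_adjacent_intervals h1 h2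
    simp only [hΦ]; linarith
  have hΦderiv : ∀ u : ℝ, HasDerivAt Φ (exp (-ρ * u ^ 2)) u := by
    intro u
    exact intervalIntegral.integral_hasDerivAt_right (hgc.intervalIntegrable _ _)
      (hgc.stronglyMeasurableAtFilter _ _) hgc.continuousAt
  -- Riccati equation
  have hwderiv : ∀ z ∈ Set.Ioo a b, HasDerivAt w (Q z - m0sq - (w z) ^ 2) z := by
    intro z hz
    have hvz : v₀ z ≠ 0 := (hnodeless z hz).ne'
    have h1 : HasDerivAt v₀ (deriv v₀ z) z := (hv₀diff z).hasDerivAt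
    have h2 : HasDerivAt (deriv v₀) (deriv (deriv v₀) z) z := (hv₀'diff z).hasDerivAt
    have h2' : HasDerivAt (deriv v₀) ((Q z - m0sq) * v₀ z) z := by
      rwa [hode z (Set.mem_Icc_of_Ioo hz)] at h2
    have hdiv := h2'.div h1 hvz
    have : ((Q z - m0sq) * v₀ z * v₀ z - deriv v₀ z * deriv v₀ z) / v₀ z ^ 2
        = Q z - m0sq - (w z) ^ 2 := by
      simp only [hw]
      field_simp
    rwa [this] at hdiv
  -- continuity of w on compact subintervals of (a,b)
  have hwcont : ContinuousOn w (Set.Ioo a b) := by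
    apply hv₀'c.continuousOn.div hv₀c.continuousOn
    intro z hz; exact (hnodeless z hz).ne'
  -- unboundedness of w near a
  have hbig : ∀ M : ℝ, 0 ≤ M → ∀ c ∈ Set.Ioo a b, ∃ z ∈ Set.Ioc a c, M < w z := by
    intro M hM c hc
    by_contra hcon
    push_neg at hcon
    -- w ≤ M on Ioc a c, so log v₀ can't drop to -∞
    have hsub : Set.Ioc a c ⊆ Set.Ioo a b := fun z hz => ⟨hz.1, lt_of_le_of_lt hz.2 hc.2⟩
    have hk : MonotoneOn (fun z => M * z - Real.log (v₀ z)) (Set.Ioc a c) := by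
      apply monotoneOn_of_deriv_nonneg (convex_Ioc a c)
      · apply ContinuousOn.sub (continuousOn_const.mul continuousOn_id)
        apply ContinuousOn.log hv₀c.continuousOn
        intro z hz; exact (hnodeless z (hsub hz)).ne'
      · rw [interior_Ioc]
        intro z hz
        have hz' : z ∈ Set.Ioo a b := hsub (Set.Ioo_subset_Ioc_self hz)
        have h1 : HasDerivAt (fun z => M * z - Real.log (v₀ z)) (M - w z) z := by
          have hlog : HasDerivAt (fun z => Real.log (v₀ z)) (deriv v₀ z / v₀ z) z :=
            (hv₀diff z).hasDerivAt.log (hnodeless z hz').ne'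
          simpa [hw] using ((hasDerivAt_id z).const_mul M).fun_sub hlog
        exact h1.differentiableAt.differentiableWithinAt
      · rw [interior_Ioc]
        intro z hz
        have hz' : z ∈ Set.Ioo a b := hsub (Set.Ioo_subset_Ioc_self hz)
        have h1 : HasDerivAt (fun z => M * z - Real.log (v₀ z)) (M - w z) z := by
          have hlog : HasDerivAt (fun z => Real.log (v₀ z)) (deriv v₀ z / v₀ z) z :=
            (hv₀diff z).hasDerivAt.log (hnodeless z hz').ne'
          simpa [hw] using ((hasDerivAt_id z).const_mul M).fun_sub hlog
        rw [h1.deriv]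
        have := hcon z (Set.Ioo_subset_Ioc_self hz)
        linarith
    set ε : ℝ := exp (Real.log (v₀ c) - M * (c - a)) with hε
    have hεpos : 0 < ε := exp_pos _
    have hlower : ∀ z ∈ Set.Ioc a c, ε ≤ v₀ z := by
      intro z hz
      have hz' : z ∈ Set.Ioo a b := hsub hz
      have hzc : c ∈ Set.Ioc a c := ⟨hc.1, le_refl c⟩
      have := hk hz hzc hz.2
      simp only at this
      have hle : Real.log (v₀ c) - M * (c - z) ≤ Real.log (v₀ z) := by linarith
      have hMz : M * (c - z) ≤ M * (c - a) := by
        apply mul_le_mul_of_nonneg_left _ hM; linarith [hz.1]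
      have : Real.log (v₀ c) - M * (c - a) ≤ Real.log (v₀ z) := by linarith
      calc ε ≤ exp (Real.log (v₀ z)) := exp_le_exp.mpr this
        _ = v₀ z := exp_log (hnodeless z hz')
    -- but v₀ → 0 at a
    have htend : Tendsto v₀ (nhdsWithin a (Set.Ioi a)) (nhds 0) := by
      rw [← hbca]
      exact (hv₀c.continuousAt.tendsto).mono_left nhdsWithin_le_nhds
    have hev1 : ∀ᶠ z in nhdsWithin a (Set.Ioi a), v₀ z < ε :=
      htend (Iio_mem_nhds hεpos)
    have hev2 : ∀ᶠ z in nhdsWithin a (Set.Ioi a), z ∈ Set.Ioc a c :=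
      Ioc_mem_nhdsGT_of_mem ⟨le_refl a, hc.1⟩
    obtain ⟨z, hz1, hz2⟩ := (hev1.and hev2).exists
    exact absurd (hlower z hz2) (not_le.mpr hz1)
  -- unboundedness of w near b (below)
  have hsmall : ∀ M : ℝ, 0 ≤ M → ∀ c ∈ Set.Ioo a b, ∃ z ∈ Set.Ico c b, w z < -M := by
    intro M hM c hc
    by_contra hcon
    push_neg at hcon
    have hsub : Set.Ico c b ⊆ Set.Ioo a b := fun z hz => ⟨lt_of_lt_of_le hc.1 hz.1, hz.2⟩
    have hk : MonotoneOn (fun z => M * z + Real.log (v₀ z)) (Set.Ico c b) := by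
      apply monotoneOn_of_deriv_nonneg (convex_Ico c b)
      · apply ContinuousOn.add (continuousOn_const.mul continuousOn_id)
        apply ContinuousOn.log hv₀c.continuousOn
        intro z hz; exact (hnodeless z (hsub hz)).ne'
      · rw [interior_Ico]
        intro z hz
        have hz' : z ∈ Set.Ioo a b := hsub (Set.Ioo_subset_Ico_self hz)
        have h1 : HasDerivAt (fun z => M * z + Real.log (v₀ z)) (M + w z) z := by
          have hlog : HasDerivAt (fun z => Real.log (v₀ z)) (deriv v₀ z / v₀ z) z :=
            (hv₀diff z).hasDerivAt.log (hnodeless z hz').ne'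
          simpa [hw] using ((hasDerivAt_id z).const_mul M).fun_add hlog
        exact h1.differentiableAt.differentiableWithinAt
      · rw [interior_Ico]
        intro z hz
        have hz' : z ∈ Set.Ioo a b := hsub (Set.Ioo_subset_Ico_self hz)
        have h1 : HasDerivAt (fun z => M * z + Real.log (v₀ z)) (M + w z) z := by
          have hlog : HasDerivAt (fun z => Real.log (v₀ z)) (deriv v₀ z / v₀ z) z :=
            (hv₀diff z).hasDerivAt.log (hnodeless z hz').ne'
          simpa [hw] using ((hasDerivAt_id z).const_mul M).fun_add hlog
        rw [h1.deriv]
        have := hcon z (Set.Ioo_subset_Ico_self hz)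
        linarith
    set ε : ℝ := exp (Real.log (v₀ c) - M * (b - c)) with hε
    have hεpos : 0 < ε := exp_pos _
    have hlower : ∀ z ∈ Set.Ico c b, ε ≤ v₀ z := by
      intro z hz
      have hz' : z ∈ Set.Ioo a b := hsub hz
      have hzc : c ∈ Set.Ico c b := ⟨le_refl c, hc.2⟩
      have := hk hzc hz hz.1
      simp only at this
      have hle : Real.log (v₀ c) - M * (z - c) ≤ Real.log (v₀ z) := by linarith
      have hMz : M * (z - c) ≤ M * (b - c) := by
        apply mul_le_mul_of_nonneg_left _ hM; linarith [hz.2]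
      have : Real.log (v₀ c) - M * (b - c) ≤ Real.log (v₀ z) := by linarith
      calc ε ≤ exp (Real.log (v₀ z)) := exp_le_exp.mpr this
        _ = v₀ z := exp_log (hnodeless z hz')
    have htend : Tendsto v₀ (nhdsWithin b (Set.Iio b)) (nhds 0) := by
      rw [← hbcb]
      exact (hv₀c.continuousAt.tendsto).mono_left nhdsWithin_le_nhds
    have hev1 : ∀ᶠ z in nhdsWithin b (Set.Iio b), v₀ z < ε :=
      htend (Iio_mem_nhds hεpos)
    have hev2 : ∀ᶠ z in nhdsWithin b (Set.Iio b), z ∈ Set.Ico c b :=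
      Ico_mem_nhdsLT_of_mem ⟨hc.2, le_refl b⟩
    obtain ⟨z, hz1, hz2⟩ := (hev1.and hev2).exists
    exact absurd (hlower z hz2) (not_le.mpr hz1)
  -- integrability of exp(-ρ Q) on [a,b]
  have hQec : ContinuousOn (fun z => exp (-ρ * Q z)) (Set.Icc a b) :=
    Real.continuous_exp.comp_continuousOn (continuousOn_const.mul hQ)
  have hQint : IntervalIntegrable (fun z => exp (-ρ * Q z)) volume a b :=
    (hQec.mono (by rw [Set.uIcc_of_le hab.le])).intervalIntegrable
  -- the key integral inequality on [s,t] ⊆ (a,b)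
  have keyI : ∀ s t : ℝ, s ∈ Set.Ioo a b → t ∈ Set.Ioo a b → s ≤ t →
      K * (exp 1 * ρ * (Φ (w s) - Φ (w t))) ≤ S := by
    intro s t hs ht hst
    have hIcc : Set.Icc s t ⊆ Set.Ioo a b := fun z hz => ⟨lt_of_lt_of_le hs.1 hz.1,
      lt_of_le_of_lt hz.2 ht.2⟩
    set R : ℝ → ℝ := fun z => K * (exp 1 * ρ) * ((m0sq - Q z + (w z) ^ 2) * exp (-ρ * (w z) ^ 2))
      with hR
    -- FTC: ∫ R = K e ρ (Φ (w s) - Φ (w t))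
    have hRcont : ContinuousOn R (Set.Icc s t) := by
      apply ContinuousOn.mul continuousOn_const
      apply ContinuousOn.mul
      · apply ContinuousOn.add
        · exact (continuousOn_const.sub (hQ.mono (fun z hz =>
            Set.mem_Icc_of_Ioo (hIcc hz))))
        · exact ((hwcont.mono hIcc).pow 2)
      · exact Real.continuous_exp.comp_continuousOn
          (continuousOn_const.mul ((hwcont.mono hIcc).pow 2))
    have hRint : IntervalIntegrable R volume s t :=
      (hRcont.mono (by rw [Set.uIcc_of_le hst])).intervalIntegrable
    have hftc : ∫ z in s..t, R z =
        (fun z => -(K * (exp 1 * ρ) * Φ (w z))) t - (fun z => -(K * (exp 1 * ρ) * Φ (w z))) s := by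
      apply intervalIntegral.integral_eq_sub_of_hasDerivAt
      · intro z hz
        rw [Set.uIcc_of_le hst] at hz
        have hz' : z ∈ Set.Ioo a b := hIcc hz
        have h1 : HasDerivAt (fun z => Φ (w z))
            (exp (-ρ * (w z) ^ 2) * (Q z - m0sq - (w z) ^ 2)) z :=
          (hΦderiv (w z)).comp z (hwderiv z hz')
        have h2 := (h1.const_mul (-(K * (exp 1 * ρ))))
        have : -(K * (exp 1 * ρ)) * (exp (-ρ * (w z) ^ 2) * (Q z - m0sq - (w z) ^ 2)) = R z := by
          simp only [hR]; ring
        rw [this] at h2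
        convert h2 using 1
        ext u; ring
        ext u; ring
      · exact hRint
    -- pointwise bound R ≤ exp(-ρQ)
    have hptwise : ∀ z ∈ Set.Icc s t, R z ≤ exp (-ρ * Q z) := by
      intro z hz
      have key : exp 1 * (-ρ * (Q z - m0sq - (w z) ^ 2)) ≤ exp (-ρ * (Q z - m0sq - (w z) ^ 2)) :=
        e_mul_le_exp _
      have hexpand : exp (-ρ * Q z) =
          K * (exp (-ρ * (Q z - m0sq - (w z) ^ 2)) * exp (-ρ * (w z) ^ 2)) := by
        simp only [hK]
        rw [← Real.exp_add, ← Real.exp_add]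
        ring_nf
      rw [hexpand]
      simp only [hR]
      have hKpos : (0:ℝ) < K := exp_pos _
      have hEpos : (0:ℝ) < exp (-ρ * (w z) ^ 2) := exp_pos _
      have h1 : exp 1 * ρ * (m0sq - Q z + (w z) ^ 2) ≤ exp (-ρ * (Q z - m0sq - (w z) ^ 2)) := by
        have : exp 1 * (-ρ * (Q z - m0sq - (w z) ^ 2)) =
            exp 1 * ρ * (m0sq - Q z + (w z) ^ 2) := by ring
        linarith [key]
      calc K * (exp 1 * ρ) * ((m0sq - Q z + (w z) ^ 2) * exp (-ρ * (w z) ^ 2))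
          = K * ((exp 1 * ρ * (m0sq - Q z + (w z) ^ 2)) * exp (-ρ * (w z) ^ 2)) := by ring
        _ ≤ K * (exp (-ρ * (Q z - m0sq - (w z) ^ 2)) * exp (-ρ * (w z) ^ 2)) := by
            apply mul_le_mul_of_nonneg_left _ hKpos.le
            exact mul_le_mul_of_nonneg_right h1 hEpos.le
    -- combine
    have hmono1 : ∫ z in s..t, R z ≤ ∫ z in s..t, exp (-ρ * Q z) := by
      apply intervalIntegral.integral_mono_on hst hRint
      · exact ((hQec.mono (fun z hz => hIcc.trans Set.Ioo_subset_Icc_self hz)).mono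
          (by rw [Set.uIcc_of_le hst])).intervalIntegrable
      · exact hptwise
    have hmono2 : ∫ z in s..t, exp (-ρ * Q z) ≤ ∫ z in a..b, exp (-ρ * Q z) := by
      apply intervalIntegral.integral_mono_interval hs.1.le hst ht.2.le
      · filter_upwards with z using (exp_pos _).le
      · exact hQint
    have : K * (exp 1 * ρ) * (Φ (w s) - Φ (w t)) ≤ S := by
      have := hftc ▸ hmono1
      simp only at this
      calc K * (exp 1 * ρ) * (Φ (w s) - Φ (w t))
          = -(K * (exp 1 * ρ) * Φ (w t)) - -(K * (exp 1 * ρ) * Φ (w s)) := by ring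
        _ = ∫ z in s..t, R z := by rw [hftc]
        _ ≤ ∫ z in s..t, exp (-ρ * Q z) := hmono1
        _ ≤ ∫ z in a..b, exp (-ρ * Q z) := hmono2
        _ ≤ S := hineq
    linarith [this]
  -- for each n, get the bound with Φ n - Φ (-n)
  have hbound : ∀ n : ℕ, K * (exp 1 * ρ * ∫ t in (-(n:ℝ))..(n:ℝ), exp (-ρ * t ^ 2)) ≤ S := by
    intro n
    set c₁ : ℝ := a + (b - a) / 3 with hc₁
    set c₂ : ℝ := a + 2 * (b - a) / 3 with hc₂
    have hc₁m : c₁ ∈ Set.Ioo a b := by constructor <;> (simp only [hc₁]; linarith)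
    have hc₂m : c₂ ∈ Set.Ioo a b := by constructor <;> (simp only [hc₂]; linarith)
    obtain ⟨s, hs, hws⟩ := hbig (n:ℝ) (Nat.cast_nonneg n) c₁ hc₁m
    obtain ⟨t, ht, hwt⟩ := hsmall (n:ℝ) (Nat.cast_nonneg n) c₂ hc₂m
    have hsm : s ∈ Set.Ioo a b := ⟨hs.1, lt_of_le_of_lt hs.2 hc₁m.2⟩
    have htm : t ∈ Set.Ioo a b := ⟨lt_of_lt_of_le hc₂m.1 ht.1, ht.2⟩
    have hst : s ≤ t := by
      have : s ≤ c₁ := hs.2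
      have : c₂ ≤ t := ht.1
      simp only [hc₁, hc₂] at *
      linarith [hs.2, ht.1]
    have h1 := keyI s t hsm htm hst
    have h2 : Φ (n:ℝ) ≤ Φ (w s) := hΦmono hws.le
    have h3 : Φ (w t) ≤ Φ (-(n:ℝ)) := hΦmono hwt.le
    have h4 : Φ (n:ℝ) - Φ (-(n:ℝ)) ≤ Φ (w s) - Φ (w t) := by linarith
    have hKpos : (0:ℝ) < K := exp_pos _
    have hEρ : (0:ℝ) < exp 1 * ρ := mul_pos (exp_pos 1) hρ
    have h5 : ∫ t in (-(n:ℝ))..(n:ℝ), exp (-ρ * t ^ 2) = Φ (n:ℝ) - Φ (-(n:ℝ)) :=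
      (hΦdiff (-(n:ℝ)) (n:ℝ)).symm
    rw [h5]
    calc K * (exp 1 * ρ * (Φ (n:ℝ) - Φ (-(n:ℝ))))
        ≤ K * (exp 1 * ρ * (Φ (w s) - Φ (w t))) := by
          apply mul_le_mul_of_nonneg_left _ hKpos.le
          exact mul_le_mul_of_nonneg_left h4 hEρ.le
      _ ≤ S := h1
  -- take the limit
  have hlim : Tendsto (fun n : ℕ => ∫ t in (-(n:ℝ))..(n:ℝ), exp (-ρ * t ^ 2))
      atTop (nhds (Real.sqrt (π / ρ))) := by
    have h := MeasureTheory.intervalIntegral_tendsto_integral hgint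
      (tendsto_neg_atBot_iff.mpr tendsto_natCast_atTop_atTop) tendsto_natCast_atTop_atTop
    rwa [integral_gaussian ρ] at h
  have hlim2 : Tendsto (fun n : ℕ => K * (exp 1 * ρ * ∫ t in (-(n:ℝ))..(n:ℝ), exp (-ρ * t ^ 2)))
      atTop (nhds (K * (exp 1 * ρ * Real.sqrt (π / ρ)))) := by
    exact (hlim.const_mul _).const_mul _
  have hfinal : K * (exp 1 * ρ * Real.sqrt (π / ρ)) ≤ S :=
    le_of_tendsto hlim2 (Filter.Eventually.of_forall hbound)
  -- identify ρ √(π/ρ) = √(ρπ)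
  have hid : ρ * Real.sqrt (π / ρ) = Real.sqrt (ρ * π) := by
    rw [show ρ * π = ρ ^ 2 * (π / ρ) by field_simp, Real.sqrt_mul (sq_nonneg ρ),
      Real.sqrt_sq hρ.le]
  have hfinal' : K * S ≤ S := by
    have : K * (exp 1 * ρ * Real.sqrt (π / ρ)) = K * S := by
      rw [hS]; rw [← hid]; ring
    linarith [this ▸ hfinal]
  have hSpos : 0 < S := by
    apply mul_pos (exp_pos 1)
    exact Real.sqrt_pos.mpr (mul_pos hρ Real.pi_pos)
  have hKle : K ≤ 1 := by
    nlinarith [hfinal', hSpos]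
  have hle : -(ρ * m0sq) ≤ 0 := by
    have h1 : exp (-(ρ * m0sq)) ≤ exp 0 := by
      rw [Real.exp_zero]; exact hKle
    exact Real.exp_le_exp.mp h1
  nlinarith [hle, hρ]
end
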